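/- Let K be a division ring and γ: K → K a ring automorphism. Then the skew Laurent polynomial ring K[t^{±1}] with multiplication determined by t·a = γ(a)·t for a ∈ K is a (left and right) principal ideal domain. -/

import Mathlib

set_option linter.unusedSectionVars false

theorem skew_tinv {K : Type*} [DivisionRing K] {L : Type*} [Ring L]
    (γ : K ≃+* K) (i : K →+* L) (t : Lˣ)
    (hcomm : ∀ a : K, (t : L) * i a = i (γ a) * (t : L)) (a : K) :
    ((t⁻¹ : Lˣ) : L) * i a = i (γ⁻¹ a) * ((t⁻¹ : Lˣ) : L) := by
  have h := hcomm (γ⁻¹ a)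
  have h2 : γ ((γ⁻¹ : K ≃+* K) a) = a := γ.apply_symm_apply a
  rw [h2] at h
  calc ((t⁻¹ : Lˣ) : L) * i a
      = ((t⁻¹ : Lˣ) : L) * (i a * (t : L)) * ((t⁻¹ : Lˣ) : L) := by
        rw [mul_assoc, mul_assoc, Units.mul_inv, mul_one]
    _ = ((t⁻¹ : Lˣ) : L) * ((t : L) * i (γ⁻¹ a)) * ((t⁻¹ : Lˣ) : L) := by rw [h]
    _ = i (γ⁻¹ a) * ((t⁻¹ : Lˣ) : L) := by
        rw [← mul_assoc, Units.inv_mul, one_mul]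

theorem skew_tcomm {K : Type*} [DivisionRing K] {L : Type*} [Ring L]
    (γ : K ≃+* K) (i : K →+* L) (t : Lˣ)
    (hcomm : ∀ a : K, (t : L) * i a = i (γ a) * (t : L)) (k : ℤ) (a : K) :
    ((t ^ k : Lˣ) : L) * i a = i ((γ ^ k) a) * ((t ^ k : Lˣ) : L) := by
  induction k using Int.induction_on generalizing a with
  | zero => simp
  | succ n ih =>
      have h1 : (t ^ ((n : ℤ) + 1) : Lˣ) = t ^ (n : ℤ) * t := by rw [zpow_add_one]
      have h2 : (γ ^ ((n : ℤ) + 1)) a = (γ ^ (n : ℤ)) (γ a) := by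
        rw [zpow_add_one]; rfl
      rw [h1, h2, Units.val_mul, mul_assoc, hcomm, ← mul_assoc, ih (γ a), mul_assoc]
  | pred n ih =>
      have h1 : (t ^ (-(n : ℤ) - 1) : Lˣ) = t ^ (-(n : ℤ)) * t⁻¹ := by rw [zpow_sub_one]
      have h2 : (γ ^ (-(n : ℤ) - 1)) a = (γ ^ (-(n : ℤ))) (γ⁻¹ a) := by
        rw [zpow_sub_one]; rfl
      rw [h1, h2, Units.val_mul, mul_assoc, skew_tinv γ i t hcomm, ← mul_assoc,
        ih (γ⁻¹ a), mul_assoc]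

theorem skew_T_mul {L : Type*} [Ring L] (t : Lˣ) (m n : ℤ) :
    ((t ^ m : Lˣ) : L) * ((t ^ n : Lˣ) : L) = ((t ^ (m + n) : Lˣ) : L) := by
  rw [← Units.val_mul, ← zpow_add]

section Aux
variable {K : Type*} [DivisionRing K] {L : Type*} [Ring L] [Module K L]
variable (γ : K ≃+* K) (i : K →+* L) (t : Lˣ) (B : Module.Basis ℤ K L)
variable (hcomm : ∀ a : K, (t : L) * i a = i (γ a) * (t : L))
variable (hsmul : ∀ (a : K) (x : L), a • x = i a * x)
variable (hB : ∀ n : ℤ, B n = ((t ^ n : Lˣ) : L))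

include hsmul hB

theorem skew_repr_single (a : K) (n : ℤ) :
    B.repr (i a * ((t ^ n : Lˣ) : L)) = Finsupp.single n a := by
  rw [← hB, ← hsmul, map_smul, B.repr_self, Finsupp.smul_single, smul_eq_mul, mul_one]

include hcomm

theorem skew_coeff_mul_i (b : K) (k : ℤ) (x : L) :
    B.repr (x * i b) k = B.repr x k * (γ ^ k) b := by
  let f : L →ₗ[K] K :=
    { toFun := fun x => B.repr (x * i b) k
      map_add' := fun x y => by
        show B.repr ((x + y) * i b) k = B.repr (x * i b) k + B.repr (y * i b) k
        rw [add_mul, map_add, Finsupp.add_apply]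
      map_smul' := fun a x => by
        show B.repr ((a • x) * i b) k = a • B.repr (x * i b) k
        rw [hsmul, mul_assoc, ← hsmul a (x * i b), map_smul, Finsupp.smul_apply] }
  let g : L →ₗ[K] K :=
    { toFun := fun x => B.repr x k * (γ ^ k) b
      map_add' := fun x y => by
        show B.repr (x + y) k * (γ ^ k) b = _
        rw [map_add, Finsupp.add_apply, add_mul]
      map_smul' := fun a x => by
        show B.repr (a • x) k * (γ ^ k) b = a • (B.repr x k * (γ ^ k) b)
        rw [map_smul, Finsupp.smul_apply, smul_eq_mul, smul_eq_mul, mul_assoc] }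
  have hfg : f = g := by
    apply B.ext
    intro m
    show B.repr (B m * i b) k = B.repr (B m) k * (γ ^ k) b
    rw [hB m, skew_tcomm γ i t hcomm m b,
      skew_repr_single i t B hsmul hB ((γ ^ m) b) m, ← hB m, B.repr_self]
    rw [Finsupp.single_apply, Finsupp.single_apply]
    by_cases h : m = k
    · subst h; rw [if_pos rfl, if_pos rfl, one_mul]
    · rw [if_neg h, if_neg h, zero_mul]
  exact congrFun (congrArg (fun h => h.toFun) hfg) x

omit hcomm

theorem skew_coeff_mul_T (n k : ℤ) (x : L) :
    B.repr (x * ((t ^ n : Lˣ) : L)) k = B.repr x (k - n) := by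
  let f : L →ₗ[K] K :=
    { toFun := fun x => B.repr (x * ((t ^ n : Lˣ) : L)) k
      map_add' := fun x y => by
        show B.repr ((x + y) * _) k = B.repr (x * _) k + B.repr (y * _) k
        rw [add_mul, map_add, Finsupp.add_apply]
      map_smul' := fun a x => by
        show B.repr ((a • x) * _) k = a • B.repr (x * _) k
        rw [hsmul, mul_assoc, ← hsmul a _, map_smul, Finsupp.smul_apply] }
  let g : L →ₗ[K] K :=
    { toFun := fun x => B.repr x (k - n)
      map_add' := fun x y => by
        show B.repr (x + y) (k - n) = _
        rw [map_add, Finsupp.add_apply]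
      map_smul' := fun a x => by
        show B.repr (a • x) (k - n) = a • B.repr x (k - n)
        rw [map_smul, Finsupp.smul_apply] }
  have hfg : f = g := by
    apply B.ext
    intro m
    show B.repr (B m * ((t ^ n : Lˣ) : L)) k = B.repr (B m) (k - n)
    rw [hB m, skew_T_mul t m n, ← hB (m + n), ← hB m]
    rw [B.repr_self, B.repr_self]
    rw [Finsupp.single_apply, Finsupp.single_apply]
    by_cases h : m + n = k
    · rw [if_pos h, if_pos (by omega : m = k - n)]
    · rw [if_neg h, if_neg (by omega : ¬ m = k - n)]
  exact congrFun (congrArg (fun h => h.toFun) hfg) x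

end Aux

section Aux2
variable {K : Type*} [DivisionRing K] {L : Type*} [Ring L] [Module K L]
variable (γ : K ≃+* K) (i : K →+* L) (t : Lˣ) (B : Module.Basis ℤ K L)
variable (hcomm : ∀ a : K, (t : L) * i a = i (γ a) * (t : L))
variable (hsmul : ∀ (a : K) (x : L), a • x = i a * x)
variable (hB : ∀ n : ℤ, B n = ((t ^ n : Lˣ) : L))

include hsmul hB

theorem skew_decomp (x : L) :
    x = (B.repr x).sum fun n c => i c * ((t ^ n : Lˣ) : L) := by
  conv_lhs => rw [← B.linearCombination_repr x]
  rw [Finsupp.linearCombination_apply, Finsupp.sum, Finsupp.sum]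
  exact Finset.sum_congr rfl fun n _ => by rw [hsmul, hB]

include hcomm

theorem skew_mul_coeff (x y : L) (k : ℤ) :
    B.repr (x * y) k
      = (B.repr y).sum fun n c => B.repr x (k - n) * (γ ^ (k - n)) c := by
  conv_lhs => rw [skew_decomp i t B hsmul hB y]
  rw [Finsupp.sum, Finset.mul_sum, map_sum, Finsupp.finset_sum_apply, Finsupp.sum]
  apply Finset.sum_congr rfl
  intro n _
  rw [← mul_assoc, skew_coeff_mul_T i t B hsmul hB n k,
    skew_coeff_mul_i γ i t B hcomm hsmul hB]

theorem skew_rightmul_coeff (y : L) (b : K) (j : ℤ) (k : ℤ) :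
    B.repr (y * (i b * ((t ^ j : Lˣ) : L))) k = B.repr y (k - j) * (γ ^ (k - j)) b := by
  rw [← mul_assoc, skew_coeff_mul_T i t B hsmul hB j k,
    skew_coeff_mul_i γ i t B hcomm hsmul hB]

theorem skew_leftmul_coeff (b : K) (j : ℤ) (y : L) (k : ℤ) :
    B.repr ((i b * ((t ^ j : Lˣ) : L)) * y) k = b * (γ ^ j) (B.repr y (k - j)) := by
  rw [skew_mul_coeff γ i t B hcomm hsmul hB, Finsupp.sum,
    skew_repr_single i t B hsmul hB b j]
  rw [Finset.sum_eq_single (k - j)]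
  · have h1 : k - (k - j) = j := by omega
    rw [h1, Finsupp.single_apply, if_pos rfl]
  · intro n _ hn
    rw [Finsupp.single_apply, if_neg (by omega), zero_mul]
  · intro hns
    have h0 : B.repr y (k - j) = 0 := Finsupp.notMem_support_iff.mp hns
    have h1 : k - (k - j) = j := by omega
    rw [h0, h1, map_zero, mul_zero]

end Aux2

section Aux3
variable {K : Type*} [DivisionRing K] {L : Type*} [Ring L] [Module K L]
variable (B : Module.Basis ℤ K L)

noncomputable def sTop (x : L) : ℤ := WithBot.unbotD 0 (B.repr x).support.max
noncomputable def sBot (x : L) : ℤ := WithTop.untopD 0 (B.repr x).support.min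

theorem skew_supp_nonempty {x : L} (hx : x ≠ 0) : (B.repr x).support.Nonempty :=
  Finsupp.support_nonempty_iff.mpr fun h0 => hx (B.repr.map_eq_zero_iff.mp h0)

theorem sTop_eq {x : L} (h : (B.repr x).support.Nonempty) :
    sTop B x = (B.repr x).support.max' h := by
  rw [sTop, ← Finset.coe_max' h]; rfl

theorem sBot_eq {x : L} (h : (B.repr x).support.Nonempty) :
    sBot B x = (B.repr x).support.min' h := by
  rw [sBot, ← Finset.coe_min' h]; rfl

theorem le_sTop {x : L} {m : ℤ} (hm : m ∈ (B.repr x).support) : m ≤ sTop B x := by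
  rw [sTop_eq B ⟨m, hm⟩]; exact Finset.le_max' _ _ hm

theorem sBot_le {x : L} {m : ℤ} (hm : m ∈ (B.repr x).support) : sBot B x ≤ m := by
  rw [sBot_eq B ⟨m, hm⟩]; exact Finset.min'_le _ _ hm

theorem sTop_mem {x : L} (hx : x ≠ 0) : sTop B x ∈ (B.repr x).support := by
  rw [sTop_eq B (skew_supp_nonempty B hx)]; exact Finset.max'_mem _ _

theorem sBot_mem {x : L} (hx : x ≠ 0) : sBot B x ∈ (B.repr x).support := by
  rw [sBot_eq B (skew_supp_nonempty B hx)]; exact Finset.min'_mem _ _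

theorem coeff_zero_of_gt {x : L} {m : ℤ} (h : sTop B x < m) : B.repr x m = 0 := by
  by_contra h0
  exact absurd (le_sTop B (Finsupp.mem_support_iff.mpr h0)) (not_le.mpr h)

theorem coeff_zero_of_lt {x : L} {m : ℤ} (h : m < sBot B x) : B.repr x m = 0 := by
  by_contra h0
  exact absurd (sBot_le B (Finsupp.mem_support_iff.mpr h0)) (not_le.mpr h)

theorem sBot_le_sTop {x : L} (hx : x ≠ 0) : sBot B x ≤ sTop B x :=
  sBot_le B (sTop_mem B hx)

noncomputable def sLen (x : L) : ℕ := (sTop B x - sBot B x).toNat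

end Aux3

section Aux4
variable {K : Type*} [DivisionRing K] {L : Type*} [Ring L] [Module K L]
variable (γ : K ≃+* K) (i : K →+* L) (t : Lˣ) (B : Module.Basis ℤ K L)
variable (hcomm : ∀ a : K, (t : L) * i a = i (γ a) * (t : L))
variable (hsmul : ∀ (a : K) (x : L), a • x = i a * x)
variable (hB : ∀ n : ℤ, B n = ((t ^ n : Lˣ) : L))

theorem sLen_def (x : L) : sLen B x = (sTop B x - sBot B x).toNat := rfl

include hcomm hsmul hB

theorem skew_mul_ne_zero {x y : L} (hx : x ≠ 0) (hy : y ≠ 0) : x * y ≠ 0 := by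
  set p := sTop B x
  set q := sTop B y
  have hco : B.repr (x * y) (p + q) = B.repr x p * (γ ^ p) (B.repr y q) := by
    rw [skew_mul_coeff γ i t B hcomm hsmul hB, Finsupp.sum, Finset.sum_eq_single q]
    · rw [show p + q - q = p from by omega]
    · intro n hn hne
      have h1 : n ≤ q := le_sTop B hn
      rw [coeff_zero_of_gt B (show p < p + q - n from by omega), zero_mul]
    · intro hq; exact absurd (sTop_mem B hy) hq
  intro h0
  have h1 : B.repr x p ≠ 0 := Finsupp.mem_support_iff.mp (sTop_mem B hx)
  have h2 : B.repr y q ≠ 0 := Finsupp.mem_support_iff.mp (sTop_mem B hy)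
  have h3 : (γ ^ p) (B.repr y q) ≠ 0 := fun h =>
    h2 ((γ ^ p).injective (by rw [h, map_zero]))
  rw [h0, map_zero, Finsupp.zero_apply] at hco
  exact (mul_ne_zero h1 h3) hco.symm

end Aux4
section Aux5
variable {K : Type*} [DivisionRing K] {L : Type*} [Ring L] [Module K L]
variable (γ : K ≃+* K) (i : K →+* L) (t : Lˣ) (B : Module.Basis ℤ K L)
variable (hcomm : ∀ a : K, (t : L) * i a = i (γ a) * (t : L))
variable (hsmul : ∀ (a : K) (x : L), a • x = i a * x)
variable (hB : ∀ n : ℤ, B n = ((t ^ n : Lˣ) : L))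

include hcomm hsmul hB

theorem skew_left_principal (I : Ideal L) : Submodule.IsPrincipal I := by
  classical
  by_cases hI : I = ⊥
  · exact ⟨⟨0, by rw [hI, Submodule.span_zero_singleton]⟩⟩
  obtain ⟨g₀, hg₀I, hg₀⟩ := (Submodule.ne_bot_iff I).mp hI
  have hS : ∃ n : ℕ, ∃ g, g ∈ I ∧ g ≠ 0 ∧ sLen B g = n := ⟨_, g₀, hg₀I, hg₀, rfl⟩
  obtain ⟨g, hgI, hg, hglen⟩ := Nat.find_spec hS
  have hmin : ∀ y, y ∈ I → y ≠ 0 → Nat.find hS ≤ sLen B y :=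
    fun y h1 h2 => Nat.find_min' hS ⟨y, h1, h2, rfl⟩
  have key : ∀ N : ℕ, ∀ y, y ∈ I → y ≠ 0 → sLen B y = N → y ∈ Ideal.span {g} := by
    intro N
    induction N using Nat.strong_induction_on with
    | _ N IH =>
      intro y hyI hy hyN
      have hgq : B.repr g (sTop B g) ≠ 0 := Finsupp.mem_support_iff.mp (sTop_mem B hg)
      set p := sTop B y with hp
      set q := sTop B g with hqd
      set k := p - q with hk
      have hγ : (γ ^ k) (B.repr g q) ≠ 0 := fun h =>
        hgq ((γ ^ k).injective (by rw [h, map_zero]))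
      set a := B.repr y p * ((γ ^ k) (B.repr g q))⁻¹ with ha
      set h := (i a * ((t ^ k : Lˣ) : L)) * g with hh
      have hhspan : h ∈ Ideal.span {g} := Ideal.mem_span_singleton'.mpr ⟨_, rfl⟩
      have hhI : h ∈ I := Ideal.mul_mem_left I _ hgI
      have hcoeff : ∀ m, B.repr h m = a * (γ ^ k) (B.repr g (m - k)) := fun m =>
        skew_leftmul_coeff γ i t B hcomm hsmul hB a k g m
      have htopc : B.repr h p = B.repr y p := by
        rw [hcoeff, show p - k = q from by omega, ha, inv_mul_cancel_right₀ hγ]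
      have e1 : (q - sBot B g).toNat = Nat.find hS := hglen
      have e2 : (p - sBot B y).toNat = N := hyN
      have e3 := sBot_le_sTop B hg
      have e4 := sBot_le_sTop B hy
      have hNfind : Nat.find hS ≤ N := by rw [← hyN]; exact hmin y hyI hy
      have hub : ∀ m, p ≤ m → B.repr (y - h) m = 0 := by
        intro m hm
        rw [map_sub, Finsupp.sub_apply]
        rcases eq_or_lt_of_le hm with he | hlt
        · rw [← he, htopc, sub_self]
        · rw [coeff_zero_of_gt B hlt, hcoeff,
            coeff_zero_of_gt B (show q < m - k from by omega), map_zero, mul_zero, sub_zero]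
      have hlb : ∀ m, m < sBot B y → B.repr (y - h) m = 0 := by
        intro m hm
        rw [map_sub, Finsupp.sub_apply, coeff_zero_of_lt B hm, hcoeff,
          coeff_zero_of_lt B (show m - k < sBot B g from by omega), map_zero, mul_zero,
          sub_zero]
      by_cases hy' : y - h = 0
      · rw [show y = h from by rw [← sub_eq_zero]; exact hy']
        exact hhspan
      · have hyhI : y - h ∈ I := Submodule.sub_mem I hyI hhI
        have ht' : sTop B (y - h) < p := by
          by_contra hc
          push_neg at hc
          exact Finsupp.mem_support_iff.mp (sTop_mem B hy') (hub _ hc)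
        have hb' : sBot B y ≤ sBot B (y - h) := by
          by_contra hc
          push_neg at hc
          exact Finsupp.mem_support_iff.mp (sBot_mem B hy') (hlb _ hc)
        have hbt' : sBot B (y - h) ≤ sTop B (y - h) := sBot_le_sTop B hy'
        have hlen' : sLen B (y - h) < N := by rw [sLen_def]; omega
        have hmem : y - h ∈ Ideal.span {g} := IH _ hlen' _ hyhI hy' rfl
        rw [show y = (y - h) + h from by abel]
        exact Ideal.add_mem _ hmem hhspan
  refine ⟨⟨g, le_antisymm ?_ ((Ideal.span_singleton_le_iff_mem _).mpr hgI)⟩⟩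
  intro y hyI
  by_cases hy : y = 0
  · rw [hy]; exact Ideal.zero_mem _
  · exact key _ y hyI hy rfl

end Aux5
section Aux6
open MulOpposite
variable {K : Type*} [DivisionRing K] {L : Type*} [Ring L] [Module K L]
variable (γ : K ≃+* K) (i : K →+* L) (t : Lˣ) (B : Module.Basis ℤ K L)
variable (hcomm : ∀ a : K, (t : L) * i a = i (γ a) * (t : L))
variable (hsmul : ∀ (a : K) (x : L), a • x = i a * x)
variable (hB : ∀ n : ℤ, B n = ((t ^ n : Lˣ) : L))

include hcomm hsmul hB

theorem skew_right_principal (J : Ideal Lᵐᵒᵖ) : Submodule.IsPrincipal J := by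
  classical
  by_cases hJ : J = ⊥
  · exact ⟨⟨0, by rw [hJ, Submodule.span_zero_singleton]⟩⟩
  obtain ⟨x₀, hx₀J, hx₀⟩ := (Submodule.ne_bot_iff J).mp hJ
  have hS : ∃ n : ℕ, ∃ g : L, op g ∈ J ∧ g ≠ 0 ∧ sLen B g = n := by
    refine ⟨_, unop x₀, by rwa [op_unop], fun h => hx₀ ?_, rfl⟩
    rw [← op_unop x₀, h, op_zero]
  obtain ⟨g, hgJ, hg, hglen⟩ := Nat.find_spec hS
  have hmin : ∀ y : L, op y ∈ J → y ≠ 0 → Nat.find hS ≤ sLen B y :=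
    fun y h1 h2 => Nat.find_min' hS ⟨y, h1, h2, rfl⟩
  have key : ∀ N : ℕ, ∀ y : L, op y ∈ J → y ≠ 0 → sLen B y = N →
      op y ∈ Ideal.span {op g} := by
    intro N
    induction N using Nat.strong_induction_on with
    | _ N IH =>
      intro y hyJ hy hyN
      have hgq : B.repr g (sTop B g) ≠ 0 := Finsupp.mem_support_iff.mp (sTop_mem B hg)
      set p := sTop B y with hp
      set q := sTop B g with hqd
      set k := p - q with hk
      set b := (γ ^ q).symm ((B.repr g q)⁻¹ * B.repr y p) with hb
      set h := g * (i b * ((t ^ k : Lˣ) : L)) with hh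
      have hhop : op h = op (i b * ((t ^ k : Lˣ) : L)) * op g := by
        rw [hh, ← op_mul]
      have hhspan : op h ∈ Ideal.span {op g} :=
        Ideal.mem_span_singleton'.mpr ⟨_, hhop.symm⟩
      have hhJ : op h ∈ J := by rw [hhop]; exact Ideal.mul_mem_left J _ hgJ
      have hcoeff : ∀ m, B.repr h m = B.repr g (m - k) * (γ ^ (m - k)) b := fun m =>
        skew_rightmul_coeff γ i t B hcomm hsmul hB g b k m
      have htopc : B.repr h p = B.repr y p := by
        rw [hcoeff, show p - k = q from by omega, hb, RingEquiv.apply_symm_apply,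
          mul_inv_cancel_left₀ hgq]
      have e1 : (q - sBot B g).toNat = Nat.find hS := hglen
      have e2 : (p - sBot B y).toNat = N := hyN
      have e3 := sBot_le_sTop B hg
      have e4 := sBot_le_sTop B hy
      have hNfind : Nat.find hS ≤ N := by rw [← hyN]; exact hmin y hyJ hy
      have hub : ∀ m, p ≤ m → B.repr (y - h) m = 0 := by
        intro m hm
        rw [map_sub, Finsupp.sub_apply]
        rcases eq_or_lt_of_le hm with he | hlt
        · rw [← he, htopc, sub_self]
        · rw [coeff_zero_of_gt B hlt, hcoeff,
            coeff_zero_of_gt B (show q < m - k from by omega), zero_mul, sub_zero]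
      have hlb : ∀ m, m < sBot B y → B.repr (y - h) m = 0 := by
        intro m hm
        rw [map_sub, Finsupp.sub_apply, coeff_zero_of_lt B hm, hcoeff,
          coeff_zero_of_lt B (show m - k < sBot B g from by omega), zero_mul, sub_zero]
      by_cases hy' : y - h = 0
      · rw [show y = h from by rw [← sub_eq_zero]; exact hy']
        exact hhspan
      · have hyhJ : op (y - h) ∈ J := by
          rw [op_sub]; exact Submodule.sub_mem J hyJ hhJ
        have ht' : sTop B (y - h) < p := by
          by_contra hc
          push_neg at hc
          exact Finsupp.mem_support_iff.mp (sTop_mem B hy') (hub _ hc)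
        have hb' : sBot B y ≤ sBot B (y - h) := by
          by_contra hc
          push_neg at hc
          exact Finsupp.mem_support_iff.mp (sBot_mem B hy') (hlb _ hc)
        have hbt' : sBot B (y - h) ≤ sTop B (y - h) := sBot_le_sTop B hy'
        have hlen' : sLen B (y - h) < N := by rw [sLen_def]; omega
        have hmem : op (y - h) ∈ Ideal.span {op g} := IH _ hlen' _ hyhJ hy' rfl
        rw [show y = (y - h) + h from by abel, op_add]
        exact Ideal.add_mem _ hmem hhspan
  refine ⟨⟨op g, le_antisymm ?_ ((Ideal.span_singleton_le_iff_mem _).mpr hgJ)⟩⟩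
  intro y' hyJ
  by_cases hy : unop y' = 0
  · rw [show y' = 0 from by rw [← op_unop y', hy, op_zero]]
    exact Ideal.zero_mem _
  · rw [← op_unop y']
    exact key _ (unop y') (by rwa [op_unop]) hy rfl

end Aux6

/-- Let `K` be a division ring and `γ : K ≃ K` a ring automorphism. A skew Laurent
polynomial ring over `(K, γ)` is a ring `L` containing `K` (via `i`), with a distinguished
unit `t` satisfying `t·a = γ(a)·t`, which is free as a left `K`-module with basis
`{tⁿ : n ∈ ℤ}`. Any such ring is a domain in which every left ideal and every right ideal
is principal (i.e. a left and right PID). -/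
theorem skewLaurent_isPrincipalIdealDomain
    (K : Type*) [DivisionRing K] (γ : K ≃+* K)
    (L : Type*) [Ring L] (i : K →+* L) (t : Lˣ)
    (hcomm : ∀ a : K, (t : L) * i a = i (γ a) * (t : L))
    [Module K L] (hsmul : ∀ (a : K) (x : L), a • x = i a * x)
    (B : Module.Basis ℤ K L) (hB : ∀ n : ℤ, B n = ((t ^ n : Lˣ) : L)) :
    IsDomain L ∧ IsPrincipalIdealRing L ∧ IsPrincipalIdealRing Lᵐᵒᵖ := by
  have hnt : Nontrivial L := ⟨⟨B 0, 0, B.ne_zero 0⟩⟩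
  have hnzd : NoZeroDivisors L := ⟨fun {a b} hab => by
    by_contra hc
    push_neg at hc
    exact skew_mul_ne_zero γ i t B hcomm hsmul hB hc.1 hc.2 hab⟩
  exact ⟨NoZeroDivisors.to_isDomain L,
    ⟨fun I => skew_left_principal γ i t B hcomm hsmul hB I⟩,
    ⟨fun J => skew_right_principal γ i t B hcomm hsmul hB J⟩⟩
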